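/- Let p = 3, n ≥ 1, and x = (x_0,…,x_{n−1}) ∈ 𝔽_3^n. Then max(x) = ( Σ_{i=0}^{⌊n/2⌋} e_{2i}(x) ) · ( Σ_{i=0}^{n} e_i(x) ) − 1 in 𝔽_3, where e_i(x) denotes the i-th elementary symmetric polynomial in x_0,…,x_{n−1} (with e_0 = 1). Equivalently, max(x) = 2·( Π_{i=0}^{n−1} (1 + x_i)^2 + Π_{i=0}^{n−1} (1 − x_i^2) ) − 1. -/

import Mathlib

/-- The maximum of the components of `x`, where elements of `ZMod p` are
compared via their canonical natural-number representatives. -/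
def fmax {p n : ℕ} (x : Fin n → ZMod p) : ZMod p :=
  ((Finset.univ.sup fun i => (x i).val : ℕ) : ZMod p)

/-- The least index `i` with `x i = fmax x`, as a natural number. -/
noncomputable def argmaxN {p n : ℕ} (x : Fin n → ZMod p) : ℕ :=
  sInf {i : ℕ | ∃ h : i < n, x ⟨i, h⟩ = fmax x}

/-- The `r`-th digit of the base-`p` expansion of `k`, as an element of `ZMod p`. -/
def digitP (p k r : ℕ) : ZMod p := (((k / p ^ r) % p : ℕ) : ZMod p)

/-- Polynomial expression of the low-pass function `χ(z < t)`. -/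
def Lp (p t : ℕ) (z : ZMod p) : ZMod p :=
  ∑ k ∈ Finset.range t, (1 - (z - (k : ZMod p)) ^ (p - 1))

/-- Polynomial expression of the Kronecker delta `χ(z = t)`. -/
def deltaP (p t : ℕ) (z : ZMod p) : ZMod p := 1 - (z - (t : ZMod p)) ^ (p - 1)

/-- The `i`-th elementary symmetric polynomial of the components of `x`. -/
def esymmF {p n : ℕ} (x : Fin n → ZMod p) (i : ℕ) : ZMod p :=
  ∑ s ∈ Finset.powersetCard i (Finset.univ : Finset (Fin n)), ∏ j ∈ s, x j


lemma parity_sum {M : Type*} [AddCommMonoid M] (n : ℕ) (f : ℕ → M) :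
    ∑ j ∈ Finset.range (n+1), (if Even j then f j else 0)
      = ∑ i ∈ Finset.range (n/2+1), f (2*i) := by
  induction n with
  | zero => simp
  | succ n ih =>
    rw [Finset.sum_range_succ, ih]
    rcases Nat.even_or_odd (n+1) with he | ho
    · obtain ⟨k, hk⟩ := he
      have h1 : (n+1)/2 = n/2 + 1 := by omega
      have h2 : 2 * (n/2 + 1) = n+1 := by omega
      rw [h1, if_pos ⟨k, hk⟩]
      conv_rhs => rw [Finset.sum_range_succ]
      rw [h2]
    · obtain ⟨k, hk⟩ := ho
      have h1 : (n+1)/2 = n/2 := by omega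
      have h2 : ¬ Even (n+1) := by simp [Nat.even_iff]; omega
      rw [h1, if_neg h2, add_zero]

lemma sum_powerset_split {M : Type*} [AddCommMonoid M] (n : ℕ)
    (f : Finset (Fin n) → M) :
    ∑ t ∈ (Finset.univ : Finset (Fin n)).powerset, f t
      = ∑ j ∈ Finset.range (n+1), ∑ t ∈ Finset.powersetCard j (Finset.univ : Finset (Fin n)), f t := by
  rw [Finset.sum_powerset]
  simp

lemma sum_esymm_eq {n : ℕ} (x : Fin n → ZMod 3) :
    ∑ i ∈ Finset.range (n + 1), esymmF x i = ∏ i, (1 + x i) := by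
  have : ∀ i : Fin n, 1 + x i = x i + 1 := fun i => add_comm _ _
  simp_rw [this, Finset.prod_add, Finset.prod_const_one, mul_one]
  rw [sum_powerset_split]
  rfl

lemma even_esymm_eq {n : ℕ} (x : Fin n → ZMod 3) :
    (∏ i, (1 + x i)) + (∏ i, (1 - x i))
      = 2 * ∑ i ∈ Finset.range (n/2 + 1), esymmF x (2*i) := by
  have h1 : ∀ i : Fin n, 1 + x i = x i + 1 := fun i => add_comm _ _
  have h2 : ∀ i : Fin n, 1 - x i = (-x i) + 1 := fun i => by ring
  simp_rw [h1, h2, Finset.prod_add, Finset.prod_const_one, mul_one, ← Finset.sum_add_distrib]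
  have key : ∀ t : Finset (Fin n),
      (∏ j ∈ t, x j) + (∏ j ∈ t, -x j)
        = if Even t.card then 2 * ∏ j ∈ t, x j else 0 := by
    intro t
    have : ∏ j ∈ t, -x j = (-1)^t.card * ∏ j ∈ t, x j := by
      simp_rw [neg_eq_neg_one_mul (x _), Finset.prod_mul_distrib, Finset.prod_const]
    rw [this]
    rcases Nat.even_or_odd t.card with he | ho
    · rw [if_pos he, he.neg_one_pow]; ring
    · rw [if_neg (by simpa using ho), ho.neg_one_pow]; ring
  simp_rw [key]
  rw [sum_powerset_split]
  have inner : ∀ j ∈ Finset.range (n+1),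
      (∑ t ∈ Finset.powersetCard j (Finset.univ : Finset (Fin n)),
        if Even t.card then 2 * ∏ i ∈ t, x i else 0)
      = if Even j then 2 * esymmF x j else 0 := by
    intro j _
    by_cases hj : Even j
    · rw [if_pos hj, esymmF, Finset.mul_sum]
      refine Finset.sum_congr rfl fun t ht => ?_
      rw [if_pos (by rw [(Finset.mem_powersetCard.mp ht).2]; exact hj)]
    · rw [if_neg hj]
      refine Finset.sum_eq_zero fun t ht => ?_
      rw [if_neg (by rw [(Finset.mem_powersetCard.mp ht).2]; exact hj)]
  rw [Finset.sum_congr rfl inner]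
  have : ∀ j : ℕ, (if Even j then 2 * esymmF x j else 0) = 2 * (if Even j then esymmF x j else 0) := by
    intro j; split <;> simp
  simp_rw [this, ← Finset.mul_sum, parity_sum]

lemma zmod3_cases : ∀ a : ZMod 3, a = 0 ∨ a = 1 ∨ a = 2 := by decide

lemma key_max {n : ℕ} (x : Fin n → ZMod 3) :
    fmax x = 2 * ((∏ i, (1 + x i) ^ 2) + ∏ i, (1 - (x i) ^ 2)) - 1 := by
  have hval : ∀ j, (x j).val ≤ 2 := fun j => Nat.lt_succ_iff.mp (ZMod.val_lt (x j))
  by_cases h2 : ∃ i, x i = 2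
  · obtain ⟨i, hi⟩ := h2
    have hsup : (Finset.univ.sup fun j => (x j).val) = 2 := by
      refine le_antisymm (Finset.sup_le fun j _ => hval j) ?_
      have hv : (x i).val = 2 := by rw [hi]; rfl
      have := Finset.le_sup (f := fun j => (x j).val) (Finset.mem_univ i)
      exact le_of_eq_of_le hv.symm this
    have hP : (∏ j, (1 + x j) ^ 2) = 0 :=
      Finset.prod_eq_zero (Finset.mem_univ i) (by rw [hi]; decide)
    have hQ : (∏ j, (1 - (x j) ^ 2)) = 0 :=
      Finset.prod_eq_zero (Finset.mem_univ i) (by rw [hi]; decide)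
    rw [fmax, hsup, hP, hQ]; decide
  · push_neg at h2
    by_cases h1 : ∃ i, x i = 1
    · obtain ⟨i, hi⟩ := h1
      have hsup : (Finset.univ.sup fun j => (x j).val) = 1 := by
        refine le_antisymm (Finset.sup_le fun j _ => ?_) ?_
        · rcases zmod3_cases (x j) with h | h | h
          · rw [h]; decide
          · rw [h]; decide
          · exact absurd h (h2 j)
        · have hv : (x i).val = 1 := by rw [hi]; rfl
          have := Finset.le_sup (f := fun j => (x j).val) (Finset.mem_univ i)
          exact le_of_eq_of_le hv.symm this
      have hP : (∏ j, (1 + x j) ^ 2) = 1 := by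
        refine Finset.prod_eq_one fun j _ => ?_
        rcases zmod3_cases (x j) with h | h | h
        · rw [h]; decide
        · rw [h]; decide
        · exact absurd h (h2 j)
      have hQ : (∏ j, (1 - (x j) ^ 2)) = 0 :=
        Finset.prod_eq_zero (Finset.mem_univ i) (by rw [hi]; decide)
      rw [fmax, hsup, hP, hQ]; decide
    · push_neg at h1
      have hx0 : ∀ j, x j = 0 := fun j => by
        rcases zmod3_cases (x j) with h | h | h
        · exact h
        · exact absurd h (h1 j)
        · exact absurd h (h2 j)
      have hsup : (Finset.univ.sup fun j => (x j).val) = 0 := by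
        refine Nat.le_zero.mp (Finset.sup_le fun j _ => ?_)
        rw [hx0 j]; decide
      have hP : (∏ j, (1 + x j) ^ 2) = 1 :=
        Finset.prod_eq_one fun j _ => by rw [hx0 j]; decide
      have hQ : (∏ j, (1 - (x j) ^ 2)) = 1 :=
        Finset.prod_eq_one fun j _ => by rw [hx0 j]; decide
      rw [fmax, hsup, hP, hQ]; decide

theorem max_p_three (n : ℕ) (hn : 1 ≤ n) (x : Fin n → ZMod 3) :
    fmax x =
        (∑ i ∈ Finset.range (n / 2 + 1), esymmF x (2 * i)) *
          (∑ i ∈ Finset.range (n + 1), esymmF x i) - 1 ∧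
      fmax x = 2 * ((∏ i, (1 + x i) ^ 2) + ∏ i, (1 - (x i) ^ 2)) - 1 := by
  have hQ : (∏ i, (1 - (x i) ^ 2)) = (∏ i, (1 + x i)) * ∏ i, (1 - x i) := by
    rw [← Finset.prod_mul_distrib]
    exact Finset.prod_congr rfl fun i _ => by ring
  have hP2 : (∏ i, (1 + x i) ^ 2) = (∏ i, (1 + x i)) ^ 2 := by
    rw [← Finset.prod_pow]
  refine ⟨?_, key_max x⟩
  rw [key_max x, sum_esymm_eq]
  set P := ∏ i, (1 + x i)
  set P' := ∏ i, (1 - x i)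
  have h := even_esymm_eq x
  set S1 := ∑ i ∈ Finset.range (n/2 + 1), esymmF x (2*i)
  rw [hQ, hP2]
  have h3 : (3 : ZMod 3) = 0 := by decide
  linear_combination 2 * P * h + P * S1 * h3
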